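/- Let n be a positive integer, let f : ℝⁿ → ℝ be differentiable with gradient ∇f Lipschitz continuous with constant L ≥ 0, let g : ℝⁿ → ℝ, and let λ, α > 0. If points x, v ∈ ℝⁿ satisfy ⟪∇f(x), v - x⟫ + (1/(2λα))‖v - x‖² + g(v) ≤ g(x), then f(v) + g(v) ≤ f(x) + g(x) - (1/(2λα) - L/2)‖v - x‖². -/

import Mathlib

open Real
open scoped RealInnerProductSpace

theorem stmt_15 (n : ℕ) (hn : 0 < n)
    (f g : EuclideanSpace ℝ (Fin n) → ℝ)
    (hf : Differentiable ℝ f) (L : ℝ) (hL : 0 ≤ L)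
    (hlip : ∀ x y, ‖gradient f x - gradient f y‖ ≤ L * ‖x - y‖)
    (lam α : ℝ) (hlam : 0 < lam) (hα : 0 < α)
    (x v : EuclideanSpace ℝ (Fin n))
    (h : ⟪gradient f x, v - x⟫ + (1 / (2 * lam * α)) * ‖v - x‖ ^ 2 + g v ≤ g x) :
    f v + g v ≤ f x + g x - (1 / (2 * lam * α) - L / 2) * ‖v - x‖ ^ 2 := by
  set u : EuclideanSpace ℝ (Fin n) := v - x with hu
  -- descent lemma: f v ≤ f x + ⟪∇f x, u⟫ + L/2 ‖u‖²
  have hgrad_cont : Continuous (gradient f) := by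
    apply LipschitzWith.continuous (K := Real.toNNReal L)
    apply LipschitzWith.of_dist_le_mul
    intro a b
    simpa [dist_eq_norm, Real.coe_toNNReal _ hL] using hlip a b
  have curve : ∀ t : ℝ, HasDerivAt (fun t : ℝ => x + t • u) u t := by
    intro t
    simpa using ((hasDerivAt_id t).smul_const u).const_add x
  have hderiv : ∀ t : ℝ, HasDerivAt (fun t : ℝ => f (x + t • u))
      ⟪gradient f (x + t • u), u⟫ t := by
    intro t
    have h1 : HasGradientAt f (gradient f (x + t • u)) (x + t • u) :=
      (hf (x + t • u)).hasGradientAt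
    have h2 := h1.hasFDerivAt.comp_hasDerivAt t (curve t)
    exact h2
  have hcont : Continuous fun t : ℝ => ⟪gradient f (x + t • u), u⟫ := by
    exact (Continuous.inner (hgrad_cont.comp (by continuity)) continuous_const)
  have hint : f (x + (1:ℝ) • u) - f (x + (0:ℝ) • u)
      = ∫ t in (0:ℝ)..1, ⟪gradient f (x + t • u), u⟫ := by
    symm
    exact intervalIntegral.integral_eq_sub_of_hasDerivAt (fun t _ => hderiv t)
      (hcont.intervalIntegrable 0 1)
  have hbound : (∫ t in (0:ℝ)..1, ⟪gradient f (x + t • u), u⟫)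
      ≤ ⟪gradient f x, u⟫ + L / 2 * ‖u‖ ^ 2 := by
    have h1 : (∫ t in (0:ℝ)..1, ⟪gradient f x, u⟫ + L * t * ‖u‖ ^ 2)
        = ⟪gradient f x, u⟫ + L / 2 * ‖u‖ ^ 2 := by
      have e1 : (fun t : ℝ => ⟪gradient f x, u⟫ + L * t * ‖u‖ ^ 2)
          = fun t : ℝ => ⟪gradient f x, u⟫ + (L * ‖u‖ ^ 2) * t := by
        funext t; ring
      rw [e1, intervalIntegral.integral_add (f := fun _ : ℝ => ⟪gradient f x, u⟫) (g := fun t : ℝ => (L * ‖u‖ ^ 2) * t) (intervalIntegrable_const)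
        ((continuous_const.mul (continuous_id') : Continuous fun t : ℝ => (L * ‖u‖ ^ 2) * t).intervalIntegrable 0 1),
        intervalIntegral.integral_const_mul, integral_id,
        intervalIntegral.integral_const]
      simp; ring
    rw [← h1]
    apply intervalIntegral.integral_mono_on (by norm_num)
      (hcont.intervalIntegrable 0 1)
      ((continuous_const.add ((continuous_const.mul (continuous_id')).mul continuous_const) : Continuous fun t : ℝ => ⟪gradient f x, u⟫ + L * t * ‖u‖ ^ 2).intervalIntegrable 0 1)
    intro t ht
    have key : ⟪gradient f (x + t • u) - gradient f x, u⟫ ≤ L * t * ‖u‖ ^ 2 := by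
      calc ⟪gradient f (x + t • u) - gradient f x, u⟫
          ≤ ‖gradient f (x + t • u) - gradient f x‖ * ‖u‖ := real_inner_le_norm _ _
        _ ≤ (L * ‖(x + t • u) - x‖) * ‖u‖ :=
            mul_le_mul_of_nonneg_right (hlip _ _) (norm_nonneg u)
        _ = L * t * ‖u‖ ^ 2 := by
            have : ‖(x + t • u) - x‖ = t * ‖u‖ := by
              simp [norm_smul, abs_of_nonneg ht.1]
            rw [this]; ring
    have := inner_sub_left (𝕜 := ℝ) (gradient f (x + t • u)) (gradient f x) u
    show ⟪gradient f (x + t • u), u⟫ ≤ ⟪gradient f x, u⟫ + L * t * ‖u‖ ^ 2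
    linarith [key, this ▸ key]
  have hdescent : f v ≤ f x + ⟪gradient f x, u⟫ + L / 2 * ‖u‖ ^ 2 := by
    have hv : x + (1:ℝ) • u = v := by simp [hu]
    have hx : x + (0:ℝ) • u = x := by simp
    rw [hv, hx] at hint
    linarith [hint ▸ hbound]
  nlinarith [hdescent, h, sq_nonneg ‖u‖]
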